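/- arXiv:1811.02995 — 2 statements merged into one kernel-verified Lean document; each statement's English description precedes it below -/
import Mathlib

section
/- Let Γ be a connected vertex-transitive digraph with Property Z and G = Aut(Γ), with fibres Γ_i. If G_{(Γ_0)} is non-trivial and each set Γ_i is finite, then G_{(Γ_0)} acts non-trivially on both Γ_{-1} and Γ_1. -/
variable {V : Type*}

/-- The automorphism group of a digraph given by its arc relation `E`. -/
def autGroup (E : V → V → Prop) : Subgroup (Equiv.Perm V) where
  carrier := {g | ∀ u v : V, E u v ↔ E (g u) (g v)}
  one_mem' := by intro u v; simp
  mul_mem' := by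
    intro a b ha hb u v
    simpa [Equiv.Perm.mul_apply] using (hb u v).trans (ha (b u) (b v))
  inv_mem' := by
    intro a ha u v
    simpa using (ha (a⁻¹ u) (a⁻¹ v)).symm

/-- Connectedness of a digraph (in the underlying undirected sense). -/
def DConnected (E : V → V → Prop) : Prop :=
  ∀ u v : V, Relation.ReflTransGen (fun a b => E a b ∨ E b a) u v

/-- `f : Fin (k+1) → V` is a `k`-arc. -/
def IsKArc (E : V → V → Prop) (k : ℕ) (f : Fin (k + 1) → V) : Prop :=
  ∀ i : Fin k, E (f i.castSucc) (f i.succ)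

def KArcTransitive (E : V → V → Prop) (k : ℕ) : Prop :=
  ∀ f g : Fin (k + 1) → V, IsKArc E k f → IsKArc E k g →
    ∃ a ∈ autGroup E, ∀ i, (a : Equiv.Perm V) (f i) = g i

def HighlyArcTransitive (E : V → V → Prop) : Prop :=
  ∀ k : ℕ, KArcTransitive E k

def VertexTransitive (E : V → V → Prop) : Prop :=
  ∀ u v : V, ∃ a ∈ autGroup E, (a : Equiv.Perm V) u = v

def ArcTransitive (E : V → V → Prop) : Prop :=
  ∀ u v x y : V, E u v → E x y →
    ∃ a ∈ autGroup E, (a : Equiv.Perm V) u = x ∧ (a : Equiv.Perm V) v = y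

/-- Reachability in the underlying undirected graph avoiding the vertex set `S`. -/
def ReachAvoid (E : V → V → Prop) (S : Set V) : V → V → Prop :=
  Relation.ReflTransGen (fun a b => (E a b ∨ E b a) ∧ a ∉ S ∧ b ∉ S)

/-- `u` lies in an infinite component of the complement of `S`. -/
def InfComp (E : V → V → Prop) (S : Set V) (u : V) : Prop :=
  u ∉ S ∧ {w | ReachAvoid E S u w}.Infinite

/-- A connected digraph with exactly two ends. -/
def TwoEnded (E : V → V → Prop) : Prop :=
  DConnected E ∧
  (∀ S : Set V, S.Finite → ∀ u v w : V, InfComp E S u → InfComp E S v → InfComp E S w →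
    ReachAvoid E S u v ∨ ReachAvoid E S u w ∨ ReachAvoid E S v w) ∧
  ∃ S : Set V, S.Finite ∧ ∃ u v : V, InfComp E S u ∧ InfComp E S v ∧ ¬ ReachAvoid E S u v

/-- The stabilizer of a vertex `v` in the automorphism group. -/
def vStab (E : V → V → Prop) (v : V) : Subgroup (autGroup E) where
  carrier := {g | (g : Equiv.Perm V) v = v}
  one_mem' := rfl
  mul_mem' := by
    intro a b ha hb
    simp only [Set.mem_setOf_eq] at *
    simp [Subgroup.coe_mul, Equiv.Perm.mul_apply, ha, hb]
  inv_mem' := by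
    intro a ha
    simp only [Set.mem_setOf_eq] at *
    have := congrArg (((a : Equiv.Perm V))⁻¹ : Equiv.Perm V) ha
    simpa using this.symm

def outSet (E : V → V → Prop) (v : V) : Set V := {u | E v u}
def inSet (E : V → V → Prop) (v : V) : Set V := {u | E u v}

/-- The stabilizer of `v` acts quasi-primitively on the set `Ω`. -/
def QuasiPrimitivelyOn (E : V → V → Prop) (v : V) (Ω : Set V) : Prop :=
  (∀ u ∈ Ω, ∀ w ∈ Ω, ∃ g ∈ vStab E v, ((g : autGroup E) : Equiv.Perm V) u = w) ∧
  (∀ N : Subgroup (vStab E v), N.Normal →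
    (∀ n ∈ N, ∀ u ∈ Ω, (((n : vStab E v) : autGroup E) : Equiv.Perm V) u = u) ∨
    (∀ u ∈ Ω, ∀ w ∈ Ω, ∃ n ∈ N, (((n : vStab E v) : autGroup E) : Equiv.Perm V) u = w))


/-- Membership in `autGroup` unfolded. -/
lemma mem_autGroup' {V : Type*} {E : V → V → Prop} {g : Equiv.Perm V} :
    g ∈ autGroup E ↔ ∀ u v : V, E u v ↔ E (g u) (g v) := Iff.rfl

/-- Every automorphism shifts a `ℤ`-grading by a constant. -/
lemma shift_const' {V : Type*} {E : V → V → Prop} (hconn : DConnected E)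
    {φ : V → ℤ} (hhom : ∀ u v : V, E u v → φ v = φ u + 1)
    {g : Equiv.Perm V} (hg : g ∈ autGroup E) (u v : V) :
    φ (g u) - φ u = φ (g v) - φ v := by
  have hg' : ∀ u v : V, E u v ↔ E (g u) (g v) := mem_autGroup'.mp hg
  have h := hconn u v
  induction h with
  | refl => rfl
  | tail _ hbc ih =>
    rcases hbc with h1 | h1
    · have e1 := hhom _ _ h1
      have e2 := hhom _ _ ((hg' _ _).mp h1)
      omega
    · have e1 := hhom _ _ h1
      have e2 := hhom _ _ ((hg' _ _).mp h1)
      omega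

/-- Key lemma: if the pointwise stabilizer of level `0` pointwise stabilizes level `1`,
then (with finite level `0`) it is trivial. -/
lemma key_lemma {V : Type*} (A : Subgroup (Equiv.Perm V)) (ψ : V → ℤ)
    (hs : ∀ g ∈ A, ∀ u v : V, ψ (g u) - ψ u = ψ (g v) - ψ v)
    (hsurj : Function.Surjective ψ)
    (hfin0 : (ψ ⁻¹' {0}).Finite)
    (a : Equiv.Perm V) (haA : a ∈ A) (haψ : ∀ x, ψ (a x) = ψ x + 1)
    (Hdir : ∀ g ∈ A, (∀ x, ψ x = 0 → g x = x) → ∀ x, ψ x = 1 → g x = x)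
    (g : Equiv.Perm V) (hgA : g ∈ A) (hg0 : ∀ x, ψ x = 0 → g x = x)
    (hgne : g ≠ 1) : False := by
  -- action of integer powers of `a`
  have haInv : ∀ x, ψ (a⁻¹ x) = ψ x - 1 := by
    intro x
    have := haψ (a⁻¹ x)
    rw [show a (a⁻¹ x) = x from a.apply_symm_apply x] at this
    omega
  have hazpow : ∀ (n : ℤ) (x : V), ψ ((a ^ n) x) = ψ x + n := by
    intro n
    induction n using Int.induction_on with
    | zero => intro x; simp
    | succ n ih =>
      intro x
      have : (a ^ ((n : ℤ) + 1)) x = (a ^ (n : ℤ)) (a x) := by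
        rw [zpow_add_one]; rfl
      rw [this, ih, haψ]; ring
    | pred n ih =>
      intro x
      have : (a ^ (-(n : ℤ) - 1)) x = (a ^ (-(n : ℤ))) (a⁻¹ x) := by
        rw [zpow_sub_one]; rfl
      rw [this, ih, haInv]; ring
  -- an automorphism with a fixed point preserves all levels
  have shift0 : ∀ h ∈ A, ∀ x₀ : V, h x₀ = x₀ → ∀ x, ψ (h x) = ψ x := by
    intro h hA x₀ hfix x
    have := hs h hA x x₀
    rw [hfix] at this
    omega
  -- conjugated version of Hdir
  have Hdiri : ∀ (i : ℤ), ∀ h ∈ A, (∀ x, ψ x = i → h x = x) → ∀ x, ψ x = i + 1 → h x = x := by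
    intro i h hA hfix x hx
    have hcan : ∀ z : V, (a ^ (-i)) ((a ^ i) z) = z := by
      intro z
      have : ((a ^ (-i)) * (a ^ i)) z = (1 : Equiv.Perm V) z := by
        rw [← zpow_add]; norm_num
      simpa [Equiv.Perm.mul_apply] using this
    have hcan2 : ∀ z : V, (a ^ i) ((a ^ (-i)) z) = z := by
      intro z
      have : ((a ^ i) * (a ^ (-i))) z = (1 : Equiv.Perm V) z := by
        rw [← zpow_add]; norm_num
      simpa [Equiv.Perm.mul_apply] using this
    set h' := a ^ (-i) * h * a ^ i with hh'
    have h'A : h' ∈ A := mul_mem (mul_mem (zpow_mem haA _) hA) (zpow_mem haA _)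
    have h'app : ∀ z : V, h' z = (a ^ (-i)) (h ((a ^ i) z)) := fun z => rfl
    have h'fix0 : ∀ z, ψ z = 0 → h' z = z := by
      intro z hz
      rw [h'app, hfix ((a ^ i) z) (by rw [hazpow]; omega), hcan]
    have h'fix1 := Hdir h' h'A h'fix0
    have hz : ψ ((a ^ (-i)) x) = 1 := by rw [hazpow]; omega
    have := h'fix1 _ hz
    rw [h'app, hcan2] at this
    exact (a ^ (-i)).injective this
  -- fixing level 0 pointwise implies fixing all levels ≥ 0 pointwise
  have upFrom : ∀ h ∈ A, (∀ x, ψ x = 0 → h x = x) → ∀ x, 0 ≤ ψ x → h x = x := by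
    intro h hA h0 x hx
    have H : ∀ n : ℕ, ∀ x, ψ x = (n : ℤ) → h x = x := by
      intro n
      induction n with
      | zero => exact fun x hx => h0 x (by exact_mod_cast hx)
      | succ n ih =>
        intro x hx
        exact Hdiri n h hA ih x (by push_cast at hx ⊢; omega)
    exact H (ψ x).toNat x (by omega)
  -- the chain of pointwise stabilizers of upper sets
  set N : ℤ → Set (Equiv.Perm V) :=
    fun i => {h | h ∈ A ∧ ∀ x, i ≤ ψ x → h x = x} with hN
  have Nmono : ∀ {i j : ℤ}, i ≤ j → N i ⊆ N j := by
    intro i j hij h hh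
    exact ⟨hh.1, fun x hx => hh.2 x (le_trans hij hx)⟩
  have Nconj : ∀ (i : ℤ) (h : Equiv.Perm V), h ∈ N i ↔ a * h * a⁻¹ ∈ N (i + 1) := by
    intro i h
    constructor
    · rintro ⟨hA, hfix⟩
      refine ⟨mul_mem (mul_mem haA hA) (inv_mem haA), ?_⟩
      intro x hx
      have : (a * h * a⁻¹) x = a (h (a⁻¹ x)) := rfl
      rw [this, hfix (a⁻¹ x) (by rw [haInv]; omega), Equiv.Perm.coe_inv, Equiv.apply_symm_apply]
    · rintro ⟨hA', hfix⟩
      have heq : h = a⁻¹ * (a * h * a⁻¹) * a := by group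
      refine ⟨by rw [heq]; exact mul_mem (mul_mem (inv_mem haA) hA') haA, ?_⟩
      intro x hx
      have h1 := hfix (a x) (by rw [haψ]; omega)
      have h2 : (a * h * a⁻¹) (a x) = a (h x) := by
        simp [Equiv.Perm.mul_apply]
      rw [h2] at h1
      exact a.injective h1
  by_cases hC : ∀ j : ℤ, N (j + 1) ⊆ N j
  · -- then the stabilizer of level 0 is trivial: contradiction with g ≠ 1
    have hgN0 : g ∈ N 0 := ⟨hgA, fun x hx => upFrom g hgA hg0 x hx⟩
    have hdown : ∀ n : ℕ, N 0 ⊆ N (-(n : ℤ)) := by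
      intro n
      induction n with
      | zero => simpa using Set.Subset.rfl
      | succ n ih =>
        have h2 := hC (-((n : ℤ) + 1))
        rw [show (-((n : ℤ) + 1) + 1) = -(n : ℤ) by ring] at h2
        intro x hx
        have : x ∈ N (-((n : ℤ) + 1)) := h2 (ih hx)
        rwa [show (-((n : ℤ) + 1)) = -(((n + 1 : ℕ)) : ℤ) by push_cast; ring] at this
    apply hgne
    apply Equiv.ext
    intro x
    rcases le_or_gt 0 (ψ x) with hx | hx
    · exact upFrom g hgA hg0 x hx
    · have hmem := hdown (-ψ x).toNat hgN0
      exact hmem.2 x (by omega)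
  · -- otherwise the chain is strictly increasing somewhere, hence everywhere above:
    -- contradiction with finiteness of the fibre
    push_neg at hC
    obtain ⟨j, hj⟩ := hC
    rw [Set.not_subset] at hj
    obtain ⟨h₀, h₀mem, h₀not⟩ := hj
    have hstrictN : ∀ n : ℕ, ∃ h, h ∈ N (j + n + 1) ∧ h ∉ N (j + n) := by
      intro n
      induction n with
      | zero => exact ⟨h₀, by simpa using h₀mem, by simpa using h₀not⟩
      | succ n ih =>
        obtain ⟨h, h1, h2⟩ := ih
        refine ⟨a * h * a⁻¹, ?_, ?_⟩
        · have := (Nconj (j + n + 1) h).mp h1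
          rwa [show (j + (n : ℤ) + 1 + 1) = j + ((n + 1 : ℕ) : ℤ) + 1 from by push_cast; ring] at this
        · intro hbad
          apply h2
          apply (Nconj (j + n) h).mpr
          rwa [show (j + (n : ℤ) + 1) = j + ((n + 1 : ℕ) : ℤ) from by push_cast; ring]
    have hstrict : ∀ i : ℤ, j ≤ i → ∃ h, h ∈ N (i + 1) ∧ h ∉ N i := by
      intro i hi
      obtain ⟨h, h1, h2⟩ := hstrictN (i - j).toNat
      have he : j + ((i - j).toNat : ℤ) = i := by omega
      rw [he] at h1 h2
      exact ⟨h, h1, h2⟩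
    set j' : ℤ := max j 0 with hj'
    have hj'0 : 0 ≤ j' := le_max_right _ _
    have hjj' : j ≤ j' := le_max_left _ _
    -- restriction to the fibre of 0
    set T : Set V := ψ ⁻¹' {0} with hT
    haveI : Finite ↥T := hfin0.to_subtype
    set R : Equiv.Perm V → (↥T → V) := fun h => fun x => h (x : V) with hR
    set F : ℕ → Set (↥T → V) := fun n => R '' (N (j' + (n : ℤ))) with hF
    set S : Set (↥T → V) := Set.pi Set.univ (fun _ => T) with hS
    have hSfin : S.Finite := Set.Finite.pi (fun _ => hfin0)
    have FsubS : ∀ n : ℕ, F n ⊆ S := by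
      rintro n f ⟨h, hh, rfl⟩
      intro x _
      obtain ⟨x₁, hx₁⟩ := hsurj (j' + (n : ℤ))
      have hfix₁ : h x₁ = x₁ := hh.2 x₁ (by omega)
      have := shift0 h hh.1 x₁ hfix₁ (x : V)
      have hx0 : ψ (x : V) = 0 := x.2
      show ψ (h (x : V)) = 0
      omega
    have Fmono : ∀ n : ℕ, F n ⊆ F (n + 1) := by
      intro n
      apply Set.image_mono
      apply Nmono
      push_cast
      omega
    have Fstrict : ∀ n : ℕ, F n ⊂ F (n + 1) := by
      intro n
      rw [Set.ssubset_iff_of_subset (Fmono n)]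
      obtain ⟨h, hmem, hnot⟩ := hstrict (j' + (n : ℤ)) (by omega)
      refine ⟨R h, ⟨h, by rwa [show j' + ((n + 1 : ℕ) : ℤ) = j' + (n : ℤ) + 1 from by push_cast; ring], rfl⟩, ?_⟩
      rintro ⟨h', h'mem, heq⟩
      apply hnot
      set p : Equiv.Perm V := h'⁻¹ * h with hp
      have pA : p ∈ A := mul_mem (inv_mem h'mem.1) hmem.1
      have pfix0 : ∀ x, ψ x = 0 → p x = x := by
        intro x hx
        have hxy : h' (⟨x, hx⟩ : ↥T) = h (⟨x, hx⟩ : ↥T) := congrFun heq ⟨x, hx⟩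
        have : p x = h'⁻¹ (h x) := rfl
        rw [this, ← hxy]
        exact h'.symm_apply_apply x
      have pup := upFrom p pA pfix0
      have pN : p ∈ N (j' + (n : ℤ)) := ⟨pA, fun x hx => pup x (by omega)⟩
      have hcomp : h = h' * p := by rw [hp]; group
      rw [hcomp]
      refine ⟨mul_mem h'mem.1 pA, ?_⟩
      intro x hx
      have : (h' * p) x = h' (p x) := rfl
      rw [this, pN.2 x hx, h'mem.2 x hx]
    -- finiteness contradiction
    have hFfin : ∀ n : ℕ, (F n).Finite := fun n => hSfin.subset (FsubS n)
    have cStrict : StrictMono (fun n => (F n).ncard) :=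
      strictMono_nat_of_lt_succ (fun n => Set.ncard_lt_ncard (Fstrict n) (hFfin (n + 1)))
    have cle : ∀ n : ℕ, (F n).ncard ≤ S.ncard := fun n => Set.ncard_le_ncard (FsubS n) hSfin
    have h1 : S.ncard + 1 ≤ (F (S.ncard + 1)).ncard := cStrict.le_apply
    have h2 := cle (S.ncard + 1)
    omega

/-- If a connected vertex-transitive digraph with Property Z has finite
fibres and a non-trivial pointwise stabilizer of the fibre `Γ₀`, then this stabilizer acts
non-trivially on both `Γ₋₁` and `Γ₁`. -/
theorem fibre_stabilizer_nontrivial_on_both_sides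
    {V : Type*} (E : V → V → Prop)
    (hconn : DConnected E) (hvt : VertexTransitive E)
    (φ : V → ℤ) (hsurj : Function.Surjective φ)
    (hhom : ∀ u v : V, E u v → φ v = φ u + 1)
    (hfin : ∀ i : ℤ, (φ ⁻¹' {i}).Finite)
    (hnt : ∃ g : Equiv.Perm V, g ∈ autGroup E ∧ (∀ x : V, φ x = 0 → g x = x) ∧ g ≠ 1) :
    (∃ g : Equiv.Perm V, g ∈ autGroup E ∧ (∀ x : V, φ x = 0 → g x = x) ∧
      ∃ v : V, φ v = 1 ∧ g v ≠ v) ∧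
    (∃ g : Equiv.Perm V, g ∈ autGroup E ∧ (∀ x : V, φ x = 0 → g x = x) ∧
      ∃ v : V, φ v = -1 ∧ g v ≠ v) := by
  obtain ⟨g, hgA, hgfix, hgne⟩ := hnt
  have hshift : ∀ g ∈ autGroup E, ∀ u v : V, φ (g u) - φ u = φ (g v) - φ v :=
    fun g hg u v => shift_const' hconn hhom hg u v
  obtain ⟨u0, hu0⟩ := hsurj 0
  obtain ⟨v1, hv1⟩ := hsurj 1
  obtain ⟨a, haA, hau⟩ := hvt u0 v1
  have haφ : ∀ x, φ (a x) = φ x + 1 := by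
    intro x
    have := hshift a haA x u0
    rw [hau] at this
    omega
  constructor
  · by_contra h1
    push_neg at h1
    exact key_lemma (autGroup E) φ hshift hsurj (hfin 0) a haA haφ h1 g hgA hgfix hgne
  · by_contra h2
    push_neg at h2
    have ha' : ∀ x, -φ (a⁻¹ x) = -φ x + 1 := by
      intro x
      have := haφ (a⁻¹ x)
      rw [show a (a⁻¹ x) = x from a.apply_symm_apply x] at this
      omega
    refine key_lemma (autGroup E) (fun x => -φ x) ?_ ?_ ?_ a⁻¹ (inv_mem haA) ha' ?_ g hgA ?_ hgne
    · intro g hg u v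
      have := hshift g hg u v
      show -φ (g u) - -φ u = -φ (g v) - -φ v
      omega
    · intro i
      obtain ⟨x, hx⟩ := hsurj (-i)
      exact ⟨x, by simp [hx]⟩
    · have : (fun x => -φ x) ⁻¹' {0} = φ ⁻¹' {0} := by
        ext x; simp [neg_eq_zero]
      rw [this]; exact hfin 0
    · intro g hg hfix x hx
      have hx' : -φ x = 1 := hx
      exact h2 g hg (fun z hz => hfix z (show -φ z = 0 by omega)) x (by omega)
    · intro x hx
      have hx' : -φ x = 0 := hx
      exact hgfix x (by omega)
end

section
/- Let Γ be a vertex- and arc-transitive two-ended digraph with fibres Γ_i coming from a surjective graph homomorphism onto Z, in the case (i) of the two-ended structure theorem (Γ/N ≅ Z as an undirected-line digraph). Then every vertex v ∈ Γ_i has both in- and out-neighbours in Γ_{i-1} and in Γ_{i+1}, the number of out-neighbours of v in Γ_{i-1} equals the number in Γ_{i+1}, and similarly for in-neighbours. -/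
variable {V : Type*}

lemma mem_aut_iff {E : V → V → Prop} {g : Equiv.Perm V} :
    g ∈ autGroup E ↔ ∀ u v : V, E u v ↔ E (g u) (g v) := Iff.rfl

lemma aux_step {E : V → V → Prop} {φ : V → ℤ}
    (hhom : ∀ u v : V, E u v → φ v = φ u + 1 ∨ φ v = φ u - 1)
    (hcongr : ∀ g : Equiv.Perm V, g ∈ autGroup E → ∀ u v : V, φ u = φ v → φ (g u) = φ (g v))
    (hcaseI : ∀ i : ℤ, (∃ u v : V, φ u = i ∧ φ v = i + 1 ∧ E u v) ∧
      (∃ u v : V, φ u = i + 1 ∧ φ v = i ∧ E u v))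
    {g : Equiv.Perm V} (hg : g ∈ autGroup E) :
    ∀ u w : V, φ w = φ u + 1 → φ (g w) = φ (g u) + 1 ∨ φ (g w) = φ (g u) - 1 := by
  intro u w h
  obtain ⟨⟨u', w', hu', hw', he⟩, -⟩ := hcaseI (φ u)
  have h1 : φ (g u') = φ (g u) := hcongr g hg u' u hu'
  have h2 : φ (g w') = φ (g w) := hcongr g hg w' w (by omega)
  have h3 : E (g u') (g w') := (mem_aut_iff.mp hg u' w').mp he
  rcases hhom _ _ h3 with h4 | h4
  · left; omega
  · right; omega

lemma aux_dichotomy {E : V → V → Prop} {φ : V → ℤ}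
    (hsurj : Function.Surjective φ)
    (hhom : ∀ u v : V, E u v → φ v = φ u + 1 ∨ φ v = φ u - 1)
    (hcongr : ∀ g : Equiv.Perm V, g ∈ autGroup E → ∀ u v : V, φ u = φ v → φ (g u) = φ (g v))
    (hcaseI : ∀ i : ℤ, (∃ u v : V, φ u = i ∧ φ v = i + 1 ∧ E u v) ∧
      (∃ u v : V, φ u = i + 1 ∧ φ v = i ∧ E u v))
    {g : Equiv.Perm V} (hg : g ∈ autGroup E) :
    ∃ e : ℤ, (e = 1 ∨ e = -1) ∧ ∀ u w : V, φ w = φ u + 1 → φ (g w) = φ (g u) + e := by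
  classical
  choose s hs using hsurj
  set d : ℤ → ℤ := fun j => φ (g (s (j + 1))) - φ (g (s j)) with hd
  have hdef : ∀ j, d j = φ (g (s (j + 1))) - φ (g (s j)) := fun j => rfl
  have hd1 : ∀ j, d j = 1 ∨ d j = -1 := by
    intro j
    have h0 := aux_step hhom hcongr hcaseI hg (s j) (s (j + 1)) (by rw [hs, hs])
    have h1 := hdef j
    omega
  have hpair : ∀ u w : V, φ w = φ u + 1 → φ (g w) - φ (g u) = d (φ u) := by
    intro u w h
    have e1 : φ (g u) = φ (g (s (φ u))) := hcongr g hg u (s (φ u)) (by rw [hs])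
    have e2 : φ (g w) = φ (g (s (φ u + 1))) := hcongr g hg w (s (φ u + 1)) (by rw [hs, h])
    have e3 := hdef (φ u)
    omega
  have hinj : ∀ a b : V, φ (g a) = φ (g b) → φ a = φ b := by
    intro a b h
    have := hcongr g⁻¹ ((autGroup E).inv_mem hg) (g a) (g b) h
    simpa using this
  have hstep : ∀ j, d (j + 1) = d j := by
    intro j
    have e1 := hdef j
    have e2 := hdef (j + 1)
    rcases hd1 j with h1 | h1 <;> rcases hd1 (j + 1) with h2 | h2
    · omega
    · exfalso
      have h3 : φ (g (s (j + 1 + 1))) = φ (g (s j)) := by omega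
      have h4 := hinj _ _ h3
      rw [hs, hs] at h4; omega
    · exfalso
      have h3 : φ (g (s (j + 1 + 1))) = φ (g (s j)) := by omega
      have h4 := hinj _ _ h3
      rw [hs, hs] at h4; omega
    · omega
  have hconst : ∀ j, d j = d 0 := by
    intro j
    induction j using Int.induction_on with
    | zero => rfl
    | succ k ih => rw [hstep (k : ℤ)]; exact ih
    | pred k ih =>
      have h0 := hstep (-(k : ℤ) - 1)
      have h1 : (-(k : ℤ) - 1 + 1) = -(k : ℤ) := by ring
      rw [h1] at h0
      omega
  rcases hd1 0 with he | he
  · exact ⟨1, Or.inl rfl, fun u w h => by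
      have h1 := hpair u w h; rw [hconst (φ u)] at h1; omega⟩
  · exact ⟨-1, Or.inr rfl, fun u w h => by
      have h1 := hpair u w h; rw [hconst (φ u)] at h1; omega⟩

lemma aux_key {E : V → V → Prop} {φ : V → ℤ}
    (hsurj : Function.Surjective φ)
    (hhom : ∀ u v : V, E u v → φ v = φ u + 1 ∨ φ v = φ u - 1)
    (hcongr : ∀ g : Equiv.Perm V, g ∈ autGroup E → ∀ u v : V, φ u = φ v → φ (g u) = φ (g v))
    (hcaseI : ∀ i : ℤ, (∃ u v : V, φ u = i ∧ φ v = i + 1 ∧ E u v) ∧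
      (∃ u v : V, φ u = i + 1 ∧ φ v = i ∧ E u v))
    {g : Equiv.Perm V} (hg : g ∈ autGroup E) :
    ∃ e : ℤ, (e = 1 ∨ e = -1) ∧ ∀ u w : V, φ w = φ u + 1 ↔ φ (g w) = φ (g u) + e := by
  obtain ⟨e, hepm, he⟩ := aux_dichotomy hsurj hhom hcongr hcaseI hg
  obtain ⟨e', he'pm, he'⟩ := aux_dichotomy hsurj hhom hcongr hcaseI ((autGroup E).inv_mem hg)
  obtain ⟨u₀, hu₀⟩ := hsurj 0
  obtain ⟨w₀, hw₀⟩ := hsurj 1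
  have h01 : φ w₀ = φ u₀ + 1 := by omega
  have hgw : φ (g w₀) = φ (g u₀) + e := he u₀ w₀ h01
  have hee' : e' = e := by
    rcases hepm with rfl | rfl
    · have h := he' (g u₀) (g w₀) (by omega)
      simp only [Equiv.Perm.inv_def, Equiv.symm_apply_apply] at h
      omega
    · have h := he' (g w₀) (g u₀) (by omega)
      simp only [Equiv.Perm.inv_def, Equiv.symm_apply_apply] at h
      omega
  subst hee'
  refine ⟨e', hepm, fun u w => ⟨he u w, fun h => ?_⟩⟩
  rcases hepm with rfl | rfl
  · have h2 := he' (g u) (g w) (by omega)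
    simp only [Equiv.Perm.inv_def, Equiv.symm_apply_apply] at h2
    omega
  · have h2 := he' (g w) (g u) (by omega)
    simp only [Equiv.Perm.inv_def, Equiv.symm_apply_apply] at h2
    omega

lemma aux_img {φ : V → ℤ} (g : Equiv.Perm V) (R : V → V → Prop)
    (hR : ∀ a b : V, R a b ↔ R (g a) (g b)) (e : ℤ)
    (hkey : ∀ u w : V, φ w = φ u + 1 ↔ φ (g w) = φ (g u) + e)
    (v : V) (ee : ℤ) (hee : ee = 1 ∨ ee = -1) :
    ⇑g '' {u | R v u ∧ φ u = φ v + ee} = {u | R (g v) u ∧ φ u = φ (g v) + e * ee} := by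
  ext x
  simp only [Set.mem_image, Set.mem_setOf_eq]
  constructor
  · rintro ⟨u, ⟨hru, hphi⟩, rfl⟩
    refine ⟨(hR v u).mp hru, ?_⟩
    rcases hee with rfl | rfl
    · have h := (hkey v u).mp (by omega)
      omega
    · have h := (hkey u v).mp (by omega)
      omega
  · rintro ⟨hrx, hphi⟩
    refine ⟨g⁻¹ x, ⟨?_, ?_⟩, Equiv.apply_symm_apply g x⟩
    · have h := hR v (g⁻¹ x)
      rw [Equiv.Perm.inv_def, Equiv.apply_symm_apply] at h
      exact h.mpr hrx
    · rcases hee with rfl | rfl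
      · have h := (hkey v (g⁻¹ x)).mpr (by rw [Equiv.Perm.inv_def, Equiv.apply_symm_apply]; omega)
        omega
      · have h := (hkey (g⁻¹ x) v).mpr (by rw [Equiv.Perm.inv_def, Equiv.apply_symm_apply]; omega)
        omega

/-- In case (i) of the two-ended structure theorem (where `Γ/N ≅ ℤ` as an
undirected-line digraph, witnessed by a surjective homomorphism `φ` onto `ℤ` with arcs
changing the level by exactly `1` and arcs going in both directions between consecutive
levels), every vertex `v ∈ Γ_i` has in- and out-neighbours both in `Γ_{i-1}` and
`Γ_{i+1}`, with as many out-neighbours in `Γ_{i-1}` as in `Γ_{i+1}`, and likewise for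
in-neighbours. -/
theorem two_ended_case_line_neighbours
    {V : Type*} (E : V → V → Prop)
    (hvt : VertexTransitive E) (hat : ArcTransitive E) (h2 : TwoEnded E)
    (φ : V → ℤ) (hsurj : Function.Surjective φ)
    (hhom : ∀ u v : V, E u v → φ v = φ u + 1 ∨ φ v = φ u - 1)
    (hcongr : ∀ g : Equiv.Perm V, g ∈ autGroup E → ∀ u v : V, φ u = φ v → φ (g u) = φ (g v))
    (hcaseI : ∀ i : ℤ, (∃ u v : V, φ u = i ∧ φ v = i + 1 ∧ E u v) ∧
      (∃ u v : V, φ u = i + 1 ∧ φ v = i ∧ E u v)) :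
    ∀ v : V,
      (∃ u : V, E u v ∧ φ u = φ v - 1) ∧ (∃ u : V, E u v ∧ φ u = φ v + 1) ∧
      (∃ u : V, E v u ∧ φ u = φ v - 1) ∧ (∃ u : V, E v u ∧ φ u = φ v + 1) ∧
      {u : V | E v u ∧ φ u = φ v - 1}.ncard = {u : V | E v u ∧ φ u = φ v + 1}.ncard ∧
      {u : V | E u v ∧ φ u = φ v - 1}.ncard = {u : V | E u v ∧ φ u = φ v + 1}.ncard := by
  classical
  have key : ∀ g : Equiv.Perm V, g ∈ autGroup E →
      ∃ e : ℤ, (e = 1 ∨ e = -1) ∧ ∀ u w : V, φ w = φ u + 1 ↔ φ (g w) = φ (g u) + e :=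
    fun g hg => aux_key hsurj hhom hcongr hcaseI hg
  have hex_out : ∀ v : V, ∃ u, E v u := by
    intro v
    obtain ⟨⟨a, b, -, -, hab⟩, -⟩ := hcaseI 0
    obtain ⟨g, hg, hga⟩ := hvt a v
    exact ⟨g b, by rw [← hga]; exact (mem_aut_iff.mp hg a b).mp hab⟩
  have hex_in : ∀ v : V, ∃ u, E u v := by
    intro v
    obtain ⟨⟨a, b, -, -, hab⟩, -⟩ := hcaseI 0
    obtain ⟨g, hg, hgb⟩ := hvt b v
    exact ⟨g a, by rw [← hgb]; exact (mem_aut_iff.mp hg a b).mp hab⟩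
  have crux : ∃ v : V, ∃ g : Equiv.Perm V, g ∈ autGroup E ∧ g v = v ∧
      ∀ u w : V, φ w = φ u + 1 ↔ φ (g w) = φ (g u) + (-1) := by
    by_cases hb : ∃ v x y : V, E v x ∧ E v y ∧ φ x = φ v + 1 ∧ φ y = φ v - 1
    · obtain ⟨v, x, y, hvx, hvy, hx, hy⟩ := hb
      obtain ⟨g, hg, hgv, hgx⟩ := hat v x v y hvx hvy
      obtain ⟨e, hepm, hkey⟩ := key g hg
      have h1 : φ (g x) = φ (g v) + e := (hkey v x).mp hx
      rw [hgv, hgx] at h1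
      have he : e = -1 := by omega
      exact ⟨v, g, hg, hgv, by rw [← he]; exact hkey⟩
    · by_cases hbi : ∃ v x y : V, E x v ∧ E y v ∧ φ x = φ v + 1 ∧ φ y = φ v - 1
      · obtain ⟨v, x, y, hxv, hyv, hx, hy⟩ := hbi
        obtain ⟨g, hg, hgx, hgv⟩ := hat x v y v hxv hyv
        obtain ⟨e, hepm, hkey⟩ := key g hg
        have h1 : φ (g x) = φ (g v) + e := (hkey v x).mp hx
        rw [hgv, hgx] at h1
        have he : e = -1 := by omega
        exact ⟨v, g, hg, hgv, by rw [← he]; exact hkey⟩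
      · exfalso
        set o : V → ℤ := fun w => if ∃ u, E w u ∧ φ u = φ w + 1 then 1 else -1 with ho
        set idir : V → ℤ := fun w => if ∃ u, E u w ∧ φ u = φ w + 1 then 1 else -1 with hi
        have o_pm : ∀ w, o w = 1 ∨ o w = -1 := by
          intro w; by_cases h : ∃ u, E w u ∧ φ u = φ w + 1
          · left; simp only [ho]; rw [if_pos h]
          · right; simp only [ho]; rw [if_neg h]
        have i_pm : ∀ w, idir w = 1 ∨ idir w = -1 := by
          intro w; by_cases h : ∃ u, E u w ∧ φ u = φ w + 1
          · left; simp only [hi]; rw [if_pos h]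
          · right; simp only [hi]; rw [if_neg h]
        have o_spec : ∀ w u : V, E w u → φ u = φ w + o w := by
          intro w u hwu
          by_cases h : ∃ u', E w u' ∧ φ u' = φ w + 1
          · have how : o w = 1 := by simp only [ho]; rw [if_pos h]
            rcases hhom w u hwu with h1 | h1
            · omega
            · obtain ⟨x, hx, hx1⟩ := h
              exact absurd ⟨w, x, u, hx, hwu, hx1, by omega⟩ hb
          · have how : o w = -1 := by simp only [ho]; rw [if_neg h]
            rcases hhom w u hwu with h1 | h1
            · exact absurd ⟨u, hwu, h1⟩ h
            · omega
        have i_spec : ∀ w u : V, E u w → φ u = φ w + idir w := by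
          intro w u huw
          by_cases h : ∃ u', E u' w ∧ φ u' = φ w + 1
          · have hiw : idir w = 1 := by simp only [hi]; rw [if_pos h]
            rcases hhom u w huw with h1 | h1
            · obtain ⟨x, hx, hx1⟩ := h
              exact absurd ⟨w, x, u, hx, huw, hx1, by omega⟩ hbi
            · omega
          · have hiw : idir w = -1 := by simp only [hi]; rw [if_neg h]
            rcases hhom u w huw with h1 | h1
            · omega
            · exact absurd ⟨u, huw, by omega⟩ h
        have o_act : ∀ (g : Equiv.Perm V), g ∈ autGroup E → ∀ e : ℤ,
            (∀ u w : V, φ w = φ u + 1 ↔ φ (g w) = φ (g u) + e) → ∀ w, o (g w) = e * o w := by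
          intro g hg e hkey w
          obtain ⟨u, hu⟩ := hex_out w
          have h1 : φ u = φ w + o w := o_spec w u hu
          have h3 : φ (g u) = φ (g w) + o (g w) := o_spec _ _ ((mem_aut_iff.mp hg w u).mp hu)
          rcases o_pm w with h4 | h4
          · rw [h4] at h1 ⊢
            have h5 := (hkey w u).mp (by omega)
            omega
          · rw [h4] at h1 ⊢
            have h5 := (hkey u w).mp (by omega)
            omega
        have i_act : ∀ (g : Equiv.Perm V), g ∈ autGroup E → ∀ e : ℤ,
            (∀ u w : V, φ w = φ u + 1 ↔ φ (g w) = φ (g u) + e) → ∀ w, idir (g w) = e * idir w := by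
          intro g hg e hkey w
          obtain ⟨u, hu⟩ := hex_in w
          have h1 : φ u = φ w + idir w := i_spec w u hu
          have h3 : φ (g u) = φ (g w) + idir (g w) := i_spec _ _ ((mem_aut_iff.mp hg u w).mp hu)
          rcases i_pm w with h4 | h4
          · rw [h4] at h1 ⊢
            have h5 := (hkey w u).mp (by omega)
            omega
          · rw [h4] at h1 ⊢
            have h5 := (hkey u w).mp (by omega)
            omega
        have arc_rel : ∀ x y : V, E x y → idir y = - o x := by
          intro x y hxy
          have h1 := o_spec x y hxy
          have h3 := i_spec y x hxy
          omega
        have prod_const : ∀ p q : V, o p * idir p = o q * idir q := by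
          intro p q
          obtain ⟨g, hg, hpq⟩ := hvt p q
          obtain ⟨e, hepm, hkey⟩ := key g hg
          have h1 := o_act g hg e hkey p
          have h3 := i_act g hg e hkey p
          rw [hpq] at h1 h3
          rw [h1, h3]
          rcases hepm with rfl | rfl <;> ring
        obtain ⟨v₀, hv₀⟩ := hsurj 0
        by_cases hc : o v₀ * idir v₀ = 1
        · have hio : ∀ w, idir w = o w := by
            intro w
            have hprod : o w * idir w = 1 := (prod_const w v₀).trans hc
            rcases o_pm w with h | h <;> rcases i_pm w with h' | h' <;>
              rw [h, h'] at hprod ⊢ <;> omega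
          have step2 : ∀ x y : V, (E x y ∨ E y x) → 2 * φ y + o y = 2 * φ x + o x := by
            intro x y hxy
            rcases hxy with h | h
            · have h1 := o_spec x y h
              have h3 := arc_rel x y h
              have h4 := hio y
              omega
            · have h1 := o_spec y x h
              have h3 := arc_rel y x h
              have h4 := hio x
              omega
          have walk : ∀ x y : V, Relation.ReflTransGen (fun a b => E a b ∨ E b a) x y →
              2 * φ y + o y = 2 * φ x + o x := by
            intro x y hxy
            induction hxy with
            | refl => rfl
            | tail _ hst ih => exact (step2 _ _ hst).trans ih
          obtain ⟨a0, ha0⟩ := hsurj 0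
          obtain ⟨a5, ha5⟩ := hsurj 5
          have hw := walk a0 a5 (h2.1 a0 a5)
          rcases o_pm a0 with h | h <;> rcases o_pm a5 with h' | h' <;>
            rw [ha0, ha5, h, h'] at hw <;> omega
        · have hc' : o v₀ * idir v₀ = -1 := by
            rcases o_pm v₀ with h | h <;> rcases i_pm v₀ with h' | h' <;>
              rw [h, h'] at hc ⊢ <;> omega
          have hio : ∀ w, idir w = - o w := by
            intro w
            have hprod : o w * idir w = -1 := (prod_const w v₀).trans hc'
            rcases o_pm w with h | h <;> rcases i_pm w with h' | h' <;>
              rw [h, h'] at hprod ⊢ <;> omega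
          have step2 : ∀ x y : V, (E x y ∨ E y x) → o y = o x := by
            intro x y hxy
            rcases hxy with h | h
            · have h3 := arc_rel x y h
              have h4 := hio y
              omega
            · have h3 := arc_rel y x h
              have h4 := hio x
              omega
          have walk : ∀ x y : V, Relation.ReflTransGen (fun a b => E a b ∨ E b a) x y →
              o y = o x := by
            intro x y hxy
            induction hxy with
            | refl => rfl
            | tail _ hst ih => exact (step2 _ _ hst).trans ih
          obtain ⟨⟨a, b, ha1, hb1, hab⟩, ⟨c, d, hc1, hd1, hcd⟩⟩ := hcaseI 0
          have hoa : o a = 1 := by have := o_spec a b hab; omega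
          have hoc : o c = -1 := by have := o_spec c d hcd; omega
          have hw := walk a c (h2.1 a c)
          omega
  obtain ⟨v, r, hr, hrv, hrkey⟩ := crux
  have h_oud : ⇑r '' {u | E v u ∧ φ u = φ v + 1} = {u | E v u ∧ φ u = φ v + -1} := by
    have h := aux_img r E (mem_aut_iff.mp hr) (-1) hrkey v 1 (Or.inl rfl)
    rw [hrv] at h
    simp only [mul_one] at h
    exact h
  have h_odu : ⇑r '' {u | E v u ∧ φ u = φ v + -1} = {u | E v u ∧ φ u = φ v + 1} := by
    have h := aux_img r E (mem_aut_iff.mp hr) (-1) hrkey v (-1) (Or.inr rfl)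
    rw [hrv] at h
    simp only [neg_mul_neg, one_mul] at h
    exact h
  have h_iud : ⇑r '' {u | E u v ∧ φ u = φ v + 1} = {u | E u v ∧ φ u = φ v + -1} := by
    have h := aux_img r (fun x y => E y x) (fun x y => mem_aut_iff.mp hr y x) (-1) hrkey v 1
      (Or.inl rfl)
    rw [hrv] at h
    simp only [mul_one] at h
    exact h
  have h_idu : ⇑r '' {u | E u v ∧ φ u = φ v + -1} = {u | E u v ∧ φ u = φ v + 1} := by
    have h := aux_img r (fun x y => E y x) (fun x y => mem_aut_iff.mp hr y x) (-1) hrkey v (-1)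
      (Or.inr rfl)
    rw [hrv] at h
    simp only [neg_mul_neg, one_mul] at h
    exact h
  have hout_ne : {u | E v u ∧ φ u = φ v + 1}.Nonempty ∧ {u | E v u ∧ φ u = φ v + -1}.Nonempty := by
    obtain ⟨x0, hx0⟩ := hex_out v
    rcases hhom v x0 hx0 with h | h
    · have h1 : x0 ∈ {u | E v u ∧ φ u = φ v + 1} := ⟨hx0, by omega⟩
      exact ⟨⟨x0, h1⟩, h_oud ▸ Set.Nonempty.image _ ⟨x0, h1⟩⟩
    · have h1 : x0 ∈ {u | E v u ∧ φ u = φ v + -1} := ⟨hx0, by omega⟩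
      exact ⟨h_odu ▸ Set.Nonempty.image _ ⟨x0, h1⟩, ⟨x0, h1⟩⟩
  have hin_ne : {u | E u v ∧ φ u = φ v + 1}.Nonempty ∧ {u | E u v ∧ φ u = φ v + -1}.Nonempty := by
    obtain ⟨x0, hx0⟩ := hex_in v
    rcases hhom x0 v hx0 with h | h
    · have h1 : x0 ∈ {u | E u v ∧ φ u = φ v + -1} := ⟨hx0, by omega⟩
      exact ⟨h_idu ▸ Set.Nonempty.image _ ⟨x0, h1⟩, ⟨x0, h1⟩⟩
    · have h1 : x0 ∈ {u | E u v ∧ φ u = φ v + 1} := ⟨hx0, by omega⟩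
      exact ⟨⟨x0, h1⟩, h_iud ▸ Set.Nonempty.image _ ⟨x0, h1⟩⟩
  have hcount_out : {u | E v u ∧ φ u = φ v + -1}.ncard = {u | E v u ∧ φ u = φ v + 1}.ncard := by
    rw [← h_oud, Set.ncard_image_of_injective _ (Equiv.injective r)]
  have hcount_in : {u | E u v ∧ φ u = φ v + -1}.ncard = {u | E u v ∧ φ u = φ v + 1}.ncard := by
    rw [← h_iud, Set.ncard_image_of_injective _ (Equiv.injective r)]
  intro v'
  simp only [sub_eq_add_neg]
  obtain ⟨a, ha, hav⟩ := hvt v v'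
  obtain ⟨e, hepm, hakey⟩ := key a ha
  have houtup := aux_img a E (mem_aut_iff.mp ha) e hakey v 1 (Or.inl rfl)
  have houtdn := aux_img a E (mem_aut_iff.mp ha) e hakey v (-1) (Or.inr rfl)
  have hinup := aux_img a (fun x y => E y x) (fun x y => mem_aut_iff.mp ha y x) e hakey v 1
    (Or.inl rfl)
  have hindn := aux_img a (fun x y => E y x) (fun x y => mem_aut_iff.mp ha y x) e hakey v (-1)
    (Or.inr rfl)
  rw [hav] at houtup houtdn hinup hindn
  rcases hepm with rfl | rfl
  · simp only [one_mul] at houtup houtdn hinup hindn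
    refine ⟨?_, ?_, ?_, ?_, ?_, ?_⟩
    · have h := Set.Nonempty.image ⇑a hin_ne.2
      rw [hindn] at h
      exact h
    · have h := Set.Nonempty.image ⇑a hin_ne.1
      rw [hinup] at h
      exact h
    · have h := Set.Nonempty.image ⇑a hout_ne.2
      rw [houtdn] at h
      exact h
    · have h := Set.Nonempty.image ⇑a hout_ne.1
      rw [houtup] at h
      exact h
    · rw [← houtdn, ← houtup, Set.ncard_image_of_injective _ (Equiv.injective a),
        Set.ncard_image_of_injective _ (Equiv.injective a)]
      exact hcount_out
    · rw [← hindn, ← hinup, Set.ncard_image_of_injective _ (Equiv.injective a),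
        Set.ncard_image_of_injective _ (Equiv.injective a)]
      exact hcount_in
  · simp only [neg_mul_neg, one_mul, mul_one] at houtup houtdn hinup hindn
    refine ⟨?_, ?_, ?_, ?_, ?_, ?_⟩
    · have h := Set.Nonempty.image ⇑a hin_ne.1
      rw [hinup] at h
      exact h
    · have h := Set.Nonempty.image ⇑a hin_ne.2
      rw [hindn] at h
      exact h
    · have h := Set.Nonempty.image ⇑a hout_ne.1
      rw [houtup] at h
      exact h
    · have h := Set.Nonempty.image ⇑a hout_ne.2
      rw [houtdn] at h
      exact h
    · rw [← houtup, ← houtdn, Set.ncard_image_of_injective _ (Equiv.injective a),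
        Set.ncard_image_of_injective _ (Equiv.injective a)]
      exact hcount_out.symm
    · rw [← hinup, ← hindn, Set.ncard_image_of_injective _ (Equiv.injective a),
        Set.ncard_image_of_injective _ (Equiv.injective a)]
      exact hcount_in.symm
end
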